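/- Let G be a finite graph with at least one perfect matching and with maximum degree at most d. Then for every edge e of G, the probability that a uniformly chosen random matching of G contains e is at least 1/(d²+1). -/

import Mathlib

open Classical

/-- `M` is a matching of `G`: a set of edges of `G` that are pairwise disjoint. -/
def IsMatchingSet {V : Type*} (G : SimpleGraph V) (M : Finset (Sym2 V)) : Prop :=
  (∀ e ∈ M, e ∈ G.edgeSet) ∧
    ∀ e ∈ M, ∀ f ∈ M, e ≠ f → ∀ v : V, ¬(v ∈ e ∧ v ∈ f)

/-- A perfect matching: a matching covering every vertex. -/
def IsPerfectMatchingSet {V : Type*} (G : SimpleGraph V) (M : Finset (Sym2 V)) : Prop :=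
  IsMatchingSet G M ∧ ∀ v : V, ∃ e ∈ M, v ∈ e

open scoped Classical in
/-- Remove from `M` all edges touching `u` or `v`, then add the edge `s(u,v)`. -/
noncomputable def phiM {V : Type*} (u v : V) (M : Finset (Sym2 V)) : Finset (Sym2 V) :=
  insert s(u, v) (M.filter fun f => ¬(u ∈ f ∨ v ∈ f))

/-- Pick the (unique, for matchings) edge of `M` containing `u`, if any. -/
noncomputable def pickAt {V : Type*} (u : V) (M : Finset (Sym2 V)) : Option (Sym2 V) :=
  if h : ∃ f ∈ M, u ∈ f then some h.choose else none

open scoped Classical in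
/-- Record the edges of `M` touching `u` or `v`. -/
noncomputable def psiM {V : Type*} (u v : V) (M : Finset (Sym2 V)) :
    Option (Sym2 V) × Option (Sym2 V) :=
  if s(u, v) ∈ M then (some s(u, v), some s(u, v)) else (pickAt u M, pickAt v M)

lemma matching_unique {V : Type*} {G : SimpleGraph V} {M : Finset (Sym2 V)}
    (hM : IsMatchingSet G M) {f g : Sym2 V} (hf : f ∈ M) (hg : g ∈ M) {w : V}
    (hwf : w ∈ f) (hwg : w ∈ g) : f = g := by
  by_contra h
  exact hM.2 f hf g hg h w ⟨hwf, hwg⟩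

lemma pickAt_some {V : Type*} {u : V} {M : Finset (Sym2 V)} {f : Sym2 V}
    (h : pickAt u M = some f) : f ∈ M ∧ u ∈ f := by
  unfold pickAt at h
  split_ifs at h with h'
  · obtain ⟨hm, hu⟩ := h'.choose_spec
    exact Option.some_inj.mp h ▸ ⟨hm, hu⟩

lemma pickAt_eq {V : Type*} {G : SimpleGraph V} {M : Finset (Sym2 V)}
    (hM : IsMatchingSet G M) {u : V} {f : Sym2 V} (hf : f ∈ M) (hu : u ∈ f) :
    pickAt u M = some f := by
  have h' : ∃ g ∈ M, u ∈ g := ⟨f, hf, hu⟩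
  rw [pickAt, dif_pos h']
  obtain ⟨hm, hum⟩ := h'.choose_spec
  exact congrArg some (matching_unique hM hm hf hum hu)

lemma phiM_matching {V : Type*} {G : SimpleGraph V} {u v : V} (huv : G.Adj u v)
    {M : Finset (Sym2 V)} (hM : IsMatchingSet G M) :
    IsMatchingSet G (phiM u v M) ∧ s(u, v) ∈ phiM u v M := by
  classical
  unfold phiM
  refine ⟨⟨?_, ?_⟩, Finset.mem_insert_self _ _⟩
  · intro f hf
    rcases Finset.mem_insert.mp hf with h | h
    · rw [h, SimpleGraph.mem_edgeSet]; exact huv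
    · exact hM.1 f (Finset.mem_filter.mp h).1
  · intro a ha b hb hab w hw
    rcases Finset.mem_insert.mp ha with h1 | h1 <;> rcases Finset.mem_insert.mp hb with h2 | h2
    · exact hab (h1.trans h2.symm)
    · obtain ⟨hbM, hbP⟩ := Finset.mem_filter.mp h2
      subst h1
      rcases Sym2.mem_iff.mp hw.1 with rfl | rfl
      · exact hbP (Or.inl hw.2)
      · exact hbP (Or.inr hw.2)
    · obtain ⟨haM, haP⟩ := Finset.mem_filter.mp h1
      subst h2
      rcases Sym2.mem_iff.mp hw.2 with rfl | rfl
      · exact haP (Or.inl hw.1)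
      · exact haP (Or.inr hw.1)
    · obtain ⟨haM, _⟩ := Finset.mem_filter.mp h1
      obtain ⟨hbM, _⟩ := Finset.mem_filter.mp h2
      exact hM.2 a haM b hbM hab w hw

lemma key_subset {V : Type*} {G : SimpleGraph V} {u v : V}
    {M M' : Finset (Sym2 V)} (hM : IsMatchingSet G M) (hM' : IsMatchingSet G M')
    (hPhi : phiM u v M = phiM u v M') (hpsi : psiM u v M = psiM u v M') : M ⊆ M' := by
  classical
  intro f hf
  by_cases hP : u ∈ f ∨ v ∈ f
  · by_cases he : s(u, v) ∈ M
    · have hfe : f = s(u, v) := by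
        rcases hP with h | h
        · exact matching_unique hM hf he h (Sym2.mem_mk_left u v)
        · exact matching_unique hM hf he h (Sym2.mem_mk_right u v)
      have he' : s(u, v) ∈ M' := by
        by_contra he'
        rw [psiM, if_pos he, psiM, if_neg he'] at hpsi
        have h1 : pickAt u M' = some s(u, v) := (congrArg Prod.fst hpsi).symm
        exact he' (pickAt_some h1).1
      rw [hfe]; exact he'
    · have he' : s(u, v) ∉ M' := by
        intro he'
        rw [psiM, if_neg he, psiM, if_pos he'] at hpsi
        have h1 : pickAt u M = some s(u, v) := congrArg Prod.fst hpsi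
        exact he (pickAt_some h1).1
      rw [psiM, if_neg he, psiM, if_neg he'] at hpsi
      simp only [Prod.mk.injEq] at hpsi
      rcases hP with h | h
      · have h1 : pickAt u M = some f := pickAt_eq hM hf h
        exact (pickAt_some (hpsi.1 ▸ h1)).1
      · have h1 : pickAt v M = some f := pickAt_eq hM hf h
        exact (pickAt_some (hpsi.2 ▸ h1)).1
  · have hmem : f ∈ phiM u v M := by
      rw [phiM]
      exact Finset.mem_insert_of_mem (Finset.mem_filter.mpr ⟨hf, hP⟩)
    rw [hPhi, phiM] at hmem
    rcases Finset.mem_insert.mp hmem with h | h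
    · exact absurd (Or.inl (h ▸ Sym2.mem_mk_left u v)) hP
    · exact (Finset.mem_filter.mp h).1

lemma aux_count {V : Type*} [Fintype V] (G : SimpleGraph V) (d : ℕ)
    (hdeg : ∀ v : V, (G.neighborSet v).ncard ≤ d)
    {u v : V} (huv : G.Adj u v) :
    {M : Finset (Sym2 V) | IsMatchingSet G M}.ncard ≤
      (d ^ 2 + 1) * {M : Finset (Sym2 V) | IsMatchingSet G M ∧ s(u, v) ∈ M}.ncard := by
  classical
  set A : Finset (Finset (Sym2 V)) := Finset.univ.filter (fun M => IsMatchingSet G M) with hAdef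
  set B : Finset (Finset (Sym2 V)) :=
    Finset.univ.filter (fun M => IsMatchingSet G M ∧ s(u, v) ∈ M) with hBdef
  have hA : {M : Finset (Sym2 V) | IsMatchingSet G M}.ncard = A.card := by
    rw [← Set.ncard_coe_finset]
    congr 1
    ext M
    simp [hAdef]
  have hB : {M : Finset (Sym2 V) | IsMatchingSet G M ∧ s(u, v) ∈ M}.ncard = B.card := by
    rw [← Set.ncard_coe_finset]
    congr 1
    ext M
    simp [hBdef]
  rw [hA, hB]
  set Eu : Finset (Sym2 V) := (G.incidenceFinset u).erase s(u, v) with hEu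
  set Ev : Finset (Sym2 V) := (G.incidenceFinset v).erase s(u, v) with hEv
  set su : Finset (Option (Sym2 V)) := insert none (Eu.image some) with hsu
  set sv : Finset (Option (Sym2 V)) := insert none (Ev.image some) with hsv
  set t' : Finset (Option (Sym2 V) × Option (Sym2 V)) :=
    insert (some s(u, v), some s(u, v)) (su ×ˢ sv) with ht'
  have hcard : A.card ≤ (B ×ˢ t').card := by
    apply Finset.card_le_card_of_injOn (fun M => (phiM u v M, psiM u v M))
    · intro M hMA
      have hMm : IsMatchingSet G M := (Finset.mem_filter.mp hMA).2
      obtain ⟨h1, h2⟩ := phiM_matching huv hMm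
      refine Finset.mem_product.mpr ⟨?_, ?_⟩
      · simp only [hBdef, Finset.mem_filter, Finset.mem_univ, true_and]
        exact ⟨h1, h2⟩
      · show psiM u v M ∈ t'
        by_cases he : s(u, v) ∈ M
        · rw [psiM, if_pos he]
          exact Finset.mem_insert_self _ _
        · rw [psiM, if_neg he]
          apply Finset.mem_insert_of_mem
          refine Finset.mem_product.mpr ⟨?_, ?_⟩
          · cases hpick : pickAt u M with
            | none => exact Finset.mem_insert_self _ _
            | some f =>
              obtain ⟨hfM, huf⟩ := pickAt_some hpick
              apply Finset.mem_insert_of_mem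
              apply Finset.mem_image_of_mem
              refine Finset.mem_erase.mpr ⟨?_, ?_⟩
              · rintro rfl; exact he hfM
              · rw [SimpleGraph.mem_incidenceFinset]
                exact ⟨hMm.1 f hfM, huf⟩
          · cases hpick : pickAt v M with
            | none => exact Finset.mem_insert_self _ _
            | some f =>
              obtain ⟨hfM, hvf⟩ := pickAt_some hpick
              apply Finset.mem_insert_of_mem
              apply Finset.mem_image_of_mem
              refine Finset.mem_erase.mpr ⟨?_, ?_⟩
              · rintro rfl; exact he hfM
              · rw [SimpleGraph.mem_incidenceFinset]
                exact ⟨hMm.1 f hfM, hvf⟩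
    · intro M hMA M' hMA' h
      simp only [Prod.mk.injEq] at h
      have hMm : IsMatchingSet G M := (Finset.mem_filter.mp (hAdef ▸ hMA)).2
      have hM'm : IsMatchingSet G M' := (Finset.mem_filter.mp (hAdef ▸ hMA')).2
      exact Finset.Subset.antisymm (key_subset hMm hM'm h.1 h.2)
        (key_subset hM'm hMm h.1.symm h.2.symm)
  -- degree bounds
  have hdegcard : ∀ w : V, G.degree w ≤ d := by
    intro w
    have e1 : (G.neighborSet w).ncard = G.degree w := by
      rw [← Nat.card_coe_set_eq, Nat.card_eq_fintype_card,
        SimpleGraph.card_neighborSet_eq_degree]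
    exact e1 ▸ hdeg w
  have hd1 : 1 ≤ d := by
    have h1 : 1 ≤ G.degree u := by
      rw [← SimpleGraph.card_neighborFinset_eq_degree]
      exact Finset.card_pos.mpr ⟨v, by simpa using huv⟩
    exact h1.trans (hdegcard u)
  have hmemu : s(u, v) ∈ G.incidenceFinset u := by
    rw [SimpleGraph.mem_incidenceFinset]
    exact ⟨by rwa [SimpleGraph.mem_edgeSet], Sym2.mem_mk_left u v⟩
  have hmemv : s(u, v) ∈ G.incidenceFinset v := by
    rw [SimpleGraph.mem_incidenceFinset]
    exact ⟨by rwa [SimpleGraph.mem_edgeSet], Sym2.mem_mk_right u v⟩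
  have hEuc : Eu.card ≤ d - 1 := by
    rw [hEu, Finset.card_erase_of_mem hmemu, SimpleGraph.card_incidenceFinset_eq_degree]
    exact Nat.sub_le_sub_right (hdegcard u) 1
  have hEvc : Ev.card ≤ d - 1 := by
    rw [hEv, Finset.card_erase_of_mem hmemv, SimpleGraph.card_incidenceFinset_eq_degree]
    exact Nat.sub_le_sub_right (hdegcard v) 1
  have hsuc : su.card ≤ d := by
    calc su.card ≤ (Eu.image some).card + 1 := Finset.card_insert_le _ _
    _ ≤ Eu.card + 1 := by gcongr; exact Finset.card_image_le
    _ ≤ (d - 1) + 1 := by gcongr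
    _ = d := Nat.succ_pred_eq_of_pos hd1
  have hsvc : sv.card ≤ d := by
    calc sv.card ≤ (Ev.image some).card + 1 := Finset.card_insert_le _ _
    _ ≤ Ev.card + 1 := by gcongr; exact Finset.card_image_le
    _ ≤ (d - 1) + 1 := by gcongr
    _ = d := Nat.succ_pred_eq_of_pos hd1
  have ht'c : t'.card ≤ d ^ 2 + 1 := by
    calc t'.card ≤ (su ×ˢ sv).card + 1 := Finset.card_insert_le _ _
    _ = su.card * sv.card + 1 := by rw [Finset.card_product]
    _ ≤ d * d + 1 := by gcongr
    _ = d ^ 2 + 1 := by ring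
  calc A.card ≤ (B ×ˢ t').card := hcard
  _ = B.card * t'.card := Finset.card_product _ _
  _ ≤ B.card * (d ^ 2 + 1) := by gcongr
  _ = (d ^ 2 + 1) * B.card := Nat.mul_comm _ _

/-- For a graph of maximum degree at most `d` (admitting a perfect matching),
a uniform random matching contains a given edge `e` with probability at least `1/(d²+1)`. -/
theorem prob_edge_in_random_matching {V : Type*} [Fintype V] (G : SimpleGraph V) (d : ℕ)
    (hdeg : ∀ v : V, (G.neighborSet v).ncard ≤ d)
    (hpm : ∃ M : Finset (Sym2 V), IsPerfectMatchingSet G M)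
    (e : Sym2 V) (he : e ∈ G.edgeSet) :
    (1 : ℝ) / ((d : ℝ) ^ 2 + 1) ≤
      (({M : Finset (Sym2 V) | IsMatchingSet G M ∧ e ∈ M}.ncard : ℝ) /
        ({M : Finset (Sym2 V) | IsMatchingSet G M}.ncard : ℝ)) := by
  classical
  induction e using Sym2.ind with
  | _ u v =>
  rw [SimpleGraph.mem_edgeSet] at he
  have key := aux_count G d hdeg he
  have hBne : {M : Finset (Sym2 V) | IsMatchingSet G M ∧ s(u, v) ∈ M}.Nonempty := by
    refine ⟨{s(u, v)}, ⟨?_, ?_⟩, by simp⟩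
    · intro f hf
      rw [Finset.mem_singleton] at hf
      rw [hf, SimpleGraph.mem_edgeSet]
      exact he
    · intro a ha b hb hab w
      rw [Finset.mem_singleton] at ha hb
      exact absurd (ha.trans hb.symm) hab
  have hfinB : {M : Finset (Sym2 V) | IsMatchingSet G M ∧ s(u, v) ∈ M}.Finite :=
    Set.toFinite _
  have hfinA : {M : Finset (Sym2 V) | IsMatchingSet G M}.Finite := Set.toFinite _
  have hb : 0 < {M : Finset (Sym2 V) | IsMatchingSet G M ∧ s(u, v) ∈ M}.ncard :=
    (Set.ncard_pos hfinB).mpr hBne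
  have hab : {M : Finset (Sym2 V) | IsMatchingSet G M ∧ s(u, v) ∈ M}.ncard ≤
      {M : Finset (Sym2 V) | IsMatchingSet G M}.ncard :=
    Set.ncard_le_ncard (fun M hM => hM.1) hfinA
  have ha : 0 < {M : Finset (Sym2 V) | IsMatchingSet G M}.ncard := lt_of_lt_of_le hb hab
  rw [div_le_div_iff₀ (by positivity) (by exact_mod_cast ha)]
  have key' : ({M : Finset (Sym2 V) | IsMatchingSet G M}.ncard : ℝ) ≤
      ((d ^ 2 + 1) * {M : Finset (Sym2 V) | IsMatchingSet G M ∧ s(u, v) ∈ M}.ncard : ℕ) :=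
    Nat.cast_le.mpr key
  push_cast at key'
  linarith
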